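/- For a primitive n-th root of unity ω and a_i := (ω-1)^i · ω^{i(i+1)/2}, for all 1 ≤ i ≤ n-1: (∑_{j=0}^{i} ω^{j-i}) · a_i + a_{i-1} = ω^{i+1} · a_{i-1}. -/

import Mathlib

open Finset

/-- The coefficients `a_i = (ω-1)^i ω^{i(i+1)/2}`. -/
def aCoeff {K : Type*} [Field K] (ω : K) (i : ℕ) : K :=
  (ω - 1) ^ i * ω ^ (i * (i + 1) / 2)

theorem aCoeff_rec {K : Type*} [Field K] [CharZero K] {n : ℕ} (hn : 1 < n) {ω : K}
    (hω : IsPrimitiveRoot ω n) (i : ℕ) (hi1 : 1 ≤ i) (hi2 : i ≤ n - 1) :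
    (∑ j ∈ Finset.range (i + 1), ω ^ ((j : ℤ) - (i : ℤ))) * aCoeff ω i + aCoeff ω (i - 1) =
      ω ^ (i + 1) * aCoeff ω (i - 1) := by
  have hω0 : ω ≠ 0 := hω.ne_zero (by omega)
  obtain ⟨m, rfl⟩ : ∃ m, i = m + 1 := ⟨i - 1, by omega⟩
  simp only [Nat.add_sub_cancel]
  have hexp : (m + 1) * (m + 1 + 1) / 2 = m * (m + 1) / 2 + (m + 1) := by
    have h : (m + 1) * (m + 1 + 1) = m * (m + 1) + (m + 1) * 2 := by ring
    rw [h, Nat.add_mul_div_right _ _ two_pos]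
  have ha : aCoeff ω (m + 1) = aCoeff ω m * ((ω - 1) * ω ^ (m + 1)) := by
    simp only [aCoeff, hexp, pow_add, pow_succ]
    ring
  have hsum : (∑ j ∈ Finset.range (m + 1 + 1), ω ^ ((j : ℤ) - ((m : ℤ) + 1))) =
      (∑ j ∈ Finset.range (m + 1 + 1), ω ^ j) / ω ^ (m + 1) := by
    rw [Finset.sum_div]
    refine Finset.sum_congr rfl fun j _ => ?_
    rw [zpow_sub₀ hω0, zpow_natCast]
    norm_cast
  have hgeom : (∑ j ∈ Finset.range (m + 1 + 1), ω ^ j) * (ω - 1) = ω ^ (m + 1 + 1) - 1 :=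
    geom_sum_mul ω (m + 1 + 1)
  push_cast at hsum ⊢
  rw [ha, hsum]
  have hpow : (ω : K) ^ (m + 1) ≠ 0 := pow_ne_zero _ hω0
  field_simp
  linear_combination (aCoeff ω m) * hgeom
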